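/- Let q ≥ 2 and N ≥ 1 be integers, let n ∈ S_{q,N}, let j ∈ {0,…,q−1}, and let i be any position in {1,…,N}. If n_j ≥ 1, then K_{j,i} D_n = √(C(N−1; n−u_j)/C(N;n)) · D_{n−u_j}; if n_j = 0, then K_{j,i} D_n = 0. -/
import Mathlib


/-- The discrete simplex `S_{q,N}`: tuples of naturals of length `q` summing to `N`. -/
def simplex (q N : ℕ) : Finset (Fin q → ℕ) := Finset.Nat.antidiagonalTuple q N

/-- Multinomial coefficient `C(∑ n; n)` for a tuple of naturals. -/
def multinat {q : ℕ} (n : Fin q → ℕ) : ℕ := Nat.multinomial Finset.univ n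

/-- Multinomial coefficient for an integer tuple: `0` if some entry is negative. -/
def multZ {q : ℕ} (n : Fin q → ℤ) : ℕ :=
  if ∀ i, 0 ≤ n i then Nat.multinomial Finset.univ (fun i => (n i).toNat) else 0

/-- The `N`-qudit space `H_{q,N}`: complex-valued functions on strings `Fin N → Fin q`. -/
abbrev Hsp (q N : ℕ) := (Fin N → Fin q) → ℂ

/-- The inner product `⟨u,v⟩ = ∑_x conj (u x) · v x` on `H_{q,N}`. -/
noncomputable def hinner {q N : ℕ} (u v : Hsp q N) : ℂ :=
  ∑ x : Fin N → Fin q, (starRingEnd ℂ) (u x) * v x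

/-- The composition of a string `x : Fin N → Fin q`: `compn x i = #{k : x k = i}`. -/
def compn {q N : ℕ} (x : Fin N → Fin q) : Fin q → ℕ :=
  fun i => (Finset.univ.filter (fun k => x k = i)).card

/-- The Dicke state `D_n = C(N;n)^{-1/2} ∑_{x : comp x = n} δ_x`. -/
noncomputable def dicke {q N : ℕ} (n : Fin q → ℕ) : Hsp q N :=
  fun x => if compn x = n then (((Real.sqrt (multinat n))⁻¹ : ℝ) : ℂ) else 0

/-- The type-`j` deletion operator at position `i`: `(delAt j i v) y = v (y with j inserted
at position i)`; equivalently `delAt j i δ_x = [x i = j] · δ_{x∼i}`. -/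
def delAt {q M : ℕ} (j : Fin q) (i : Fin (M + 1)) (v : Hsp q (M + 1)) : Hsp q M :=
  fun y => v (i.insertNth j y)

lemma compn_insertNth {q M : ℕ} (j : Fin q) (i : Fin (M+1)) (y : Fin M → Fin q) :
    compn (i.insertNth j y) = fun k => compn y k + if j = k then 1 else 0 := by
  funext k
  simp only [compn, Finset.card_filter]
  rw [Fin.sum_univ_succAbove _ i]
  simp [add_comm]

/-- action of a single type-`j` deletion (at any position `i`) on a Dicke
state: if `n j ≥ 1` then `K_{j,i} D_n = √(C(N−1; n−u_j)/C(N;n)) • D_{n−u_j}`, and if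
`n j = 0` then `K_{j,i} D_n = 0`.  (Here `N = M + 1 ≥ 1` and `q ≥ 2`.) -/
theorem deletion_on_dicke (q M : ℕ) (hq : 2 ≤ q) (n : Fin q → ℕ)
    (hn : ∑ i, n i = M + 1) (j : Fin q) (i : Fin (M + 1)) :
    (1 ≤ n j →
      delAt j i (dicke n) =
        ((Real.sqrt ((multinat (Function.update n j (n j - 1)) : ℝ) / (multinat n : ℝ)) : ℝ) : ℂ) •
          dicke (Function.update n j (n j - 1))) ∧
    (n j = 0 → delAt j i (dicke n) = 0) := by
  constructor
  · intro hj
    set m := Function.update n j (n j - 1) with hm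
    have key : ∀ y : Fin M → Fin q, compn (i.insertNth j y) = n ↔ compn y = m := by
      intro y
      rw [compn_insertNth]
      constructor
      · intro h
        funext k
        have := congrFun h k
        by_cases hk : j = k
        · subst hk
          simp at this
          simp [hm, Function.update, ← this]
        · simpa [hk, hm, Function.update, Ne.symm hk] using this
      · intro h
        funext k
        have := congrFun h k
        by_cases hk : j = k
        · subst hk
          simp [hm] at this
          simp [this]
          omega
        · simpa [hk, hm, Function.update, Ne.symm hk] using this
    funext y
    have hmpos : 0 < (multinat m : ℝ) := by
      exact Nat.cast_pos.mpr (Nat.multinomial_pos _ _)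
    have hnpos : 0 < (multinat n : ℝ) := by
      exact Nat.cast_pos.mpr (Nat.multinomial_pos _ _)
    simp only [delAt, dicke, Pi.smul_apply, key y, smul_eq_mul]
    by_cases h : compn y = m
    · simp only [h, if_true]
      rw [← Complex.ofReal_mul]
      congr 1
      rw [Real.sqrt_div hmpos.le, div_mul_eq_mul_div, mul_inv_cancel₀ (by positivity),
        one_div]
    · simp [h]
  · intro hj
    funext y
    have : compn (i.insertNth j y) ≠ n := by
      rw [compn_insertNth]
      intro h
      have := congrFun h j
      simp [hj] at this
    simp [delAt, dicke, this]
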